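/- Let (z^t) be a nonnegative real sequence satisfying z^{t+1} ≤ (1 - r₁^t) z^t + r₂^t where a₁/(t+1) ≤ r₁^t ≤ 1 and 0 ≤ r₂^t ≤ a₂/(t+1)^{δ₂}, with δ₂ > 1 and 0 < a₁ < δ₂ - 1. Then for every ζ < a₁, z^t = O(1/t^ζ). -/

import Mathlib

open Real

/-- Bernoulli-type estimate: for `ζ ≥ 0` and `x ≥ 1`, `1 - ζ/x ≤ (x/(x+1))^ζ`. -/
lemma bern_aux {ζ x : ℝ} (hζ : 0 ≤ ζ) (hx : 1 ≤ x) :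
    1 - ζ / x ≤ (x / (x + 1)) ^ ζ := by
  have hx0 : (0:ℝ) < x := lt_of_lt_of_le one_pos hx
  have hx1 : (0:ℝ) < x + 1 := by linarith
  rcases le_or_gt ζ 1 with hζ1 | hζ1
  · -- ζ ≤ 1 : use (1+1/x)^ζ ≤ 1+ζ/x and invert
    have hA : ((x+1)/x) ^ ζ ≤ 1 + ζ / x := by
      have hxinv : (0:ℝ) < 1/x := by positivity
      have h := rpow_one_add_le_one_add_mul_self (s := 1/x)
        (by linarith : (-1:ℝ) ≤ 1/x) hζ hζ1
      have he : (x+1)/x = 1 + 1/x := by field_simp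
      rw [he]
      rw [mul_one_div] at h
      exact h
    have hApos : (0:ℝ) < ((x+1)/x) ^ ζ := rpow_pos_of_pos (by positivity) _
    have hrw : (x / (x + 1)) ^ ζ = 1 / (((x+1)/x) ^ ζ) := by
      rw [one_div, ← inv_rpow (by positivity), inv_div]
    rw [hrw, le_div_iff₀ hApos]
    have hnn : 0 ≤ 1 - ζ / x := by
      have : ζ / x ≤ 1 := by rw [div_le_one hx0]; linarith
      linarith
    calc (1 - ζ / x) * ((x+1)/x) ^ ζ ≤ (1 - ζ / x) * (1 + ζ / x) :=
          mul_le_mul_of_nonneg_left hA hnn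
      _ ≤ 1 := by nlinarith [div_nonneg hζ hx0.le]
  · -- 1 ≤ ζ : direct Bernoulli on (1 - 1/(x+1))^ζ
    have h := one_add_mul_self_le_rpow_one_add (s := -(1/(x+1)))
      (by rw [neg_le, neg_neg, div_le_one hx1]; linarith) hζ1.le
    have he : 1 + (-(1/(x+1))) = x / (x+1) := by field_simp; ring
    rw [he] at h
    have h2 : ζ / (x+1) ≤ ζ / x := div_le_div_of_nonneg_left hζ hx0 (by linarith)
    rw [mul_neg, mul_one_div] at h
    linarith

/-- Deterministic recursion lemma, case 3: if `z^{t+1} ≤ (1-r₁^t)z^t + r₂^t` with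
`a₁/(t+1) ≤ r₁^t ≤ 1`, `0 ≤ r₂^t ≤ a₂/(t+1)^{δ₂}`, `δ₂ > 1`, `0 < a₁ < δ₂ - 1`,
then `z^t = O(1/t^ζ)` for every `ζ < a₁`. -/
theorem recursion_rate_case3
    (z r₁ r₂ : ℕ → ℝ) (a₁ a₂ δ₂ : ℝ)
    (ha₂ : 0 < a₂)
    (hδ₂ : 1 < δ₂) (ha₁pos : 0 < a₁) (ha₁ : a₁ < δ₂ - 1)
    (hz_nonneg : ∀ t : ℕ, 0 ≤ z t)
    (hr₁ : ∀ t : ℕ, a₁ / ((t : ℝ) + 1) ≤ r₁ t ∧ r₁ t ≤ 1)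
    (hr₂ : ∀ t : ℕ, 0 ≤ r₂ t ∧ r₂ t ≤ a₂ / ((t : ℝ) + 1) ^ δ₂)
    (hrec : ∀ t : ℕ, z (t + 1) ≤ (1 - r₁ t) * z t + r₂ t) :
    ∀ ζ : ℝ, ζ < a₁ → ∃ C : ℝ, ∀ t : ℕ, z t ≤ C / ((t : ℝ) + 1) ^ ζ := by
  intro ζ hζ
  -- work with ζ' = max ζ (a₁/2) ∈ (0, a₁)
  set ζ' : ℝ := max ζ (a₁ / 2) with hζ'def
  have hζ'pos : 0 < ζ' := lt_of_lt_of_le (by linarith) (le_max_right _ _)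
  have hζ'lt : ζ' < a₁ := max_lt hζ (by linarith)
  have hζζ' : ζ ≤ ζ' := le_max_left _ _
  refine ⟨max (z 0) (a₂ / (a₁ - ζ')), ?_⟩
  set C : ℝ := max (z 0) (a₂ / (a₁ - ζ')) with hCdef
  have hCnn : 0 ≤ C := le_trans (hz_nonneg 0) (le_max_left _ _)
  have hCa : a₂ / (a₁ - ζ') ≤ C := le_max_right _ _
  have key : ∀ t : ℕ, z t ≤ C / ((t : ℝ) + 1) ^ ζ' := by
    intro t
    induction t with
    | zero =>
        simp only [Nat.cast_zero, zero_add, Real.one_rpow, div_one]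
        exact le_max_left _ _
    | succ t ih =>
      set T : ℝ := (t : ℝ) + 1 with hTdef
      have hT1 : (1:ℝ) ≤ T := by
        have : (0:ℝ) ≤ (t:ℝ) := Nat.cast_nonneg t
        rw [hTdef]; linarith
      have hT0 : (0:ℝ) < T := by linarith
      have hTpow : (0:ℝ) < T ^ ζ' := rpow_pos_of_pos hT0 _
      have hcast : ((t + 1 : ℕ) : ℝ) + 1 = T + 1 := by push_cast; ring
      have hcoef : 0 ≤ 1 - a₁ / T := by
        have h1 := (hr₁ t).1
        have h2 := (hr₁ t).2
        linarith
      have h1 : z (t + 1) ≤ (1 - a₁ / T) * z t + a₂ / T ^ δ₂ := by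
        have hb : (1 - r₁ t) * z t ≤ (1 - a₁ / T) * z t :=
          mul_le_mul_of_nonneg_right (by linarith [(hr₁ t).1]) (hz_nonneg t)
        have hc := hrec t
        have hd := (hr₂ t).2
        linarith
      have h2 : (1 - a₁ / T) * z t ≤ (1 - a₁ / T) * (C / T ^ ζ') :=
        mul_le_mul_of_nonneg_left ih hcoef
      set B : ℝ := C / T ^ ζ' with hBdef
      have hBnn : 0 ≤ B := by positivity
      have hbern : 1 - ζ' / T ≤ (T / (T + 1)) ^ ζ' := bern_aux hζ'pos.le hT1
      have hsplit : C / (T + 1) ^ ζ' = B * (T / (T + 1)) ^ ζ' := by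
        rw [hBdef, div_rpow hT0.le (by linarith : (0:ℝ) ≤ T + 1)]
        field_simp
      have hslack : a₂ / T ^ δ₂ ≤ B * ((a₁ - ζ') / T) := by
        have e1 : B * ((a₁ - ζ') / T) = C * (a₁ - ζ') / T ^ (ζ' + 1) := by
          rw [hBdef, rpow_add hT0, rpow_one]
          field_simp
        have hnum : a₂ ≤ C * (a₁ - ζ') := by
          rw [div_le_iff₀ (by linarith : 0 < a₁ - ζ')] at hCa
          linarith
        rw [e1]
        exact div_le_div₀ (by linarith) hnum (rpow_pos_of_pos hT0 _)
          (rpow_le_rpow_of_exponent_le hT1 (by linarith))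
      have hcomb : (1 - a₁ / T) * B + a₂ / T ^ δ₂ ≤ B * (1 - ζ' / T) := by
        have he : (1 - a₁ / T) * B = B * (1 - ζ' / T) - B * ((a₁ - ζ') / T) := by ring
        linarith
      have hfin : z (t + 1) ≤ C / (T + 1) ^ ζ' := by
        rw [hsplit]
        have h3 : B * (1 - ζ' / T) ≤ B * ((T / (T + 1)) ^ ζ') :=
          mul_le_mul_of_nonneg_left hbern hBnn
        linarith
      rw [hcast]
      exact hfin
  intro t
  calc z t ≤ C / ((t : ℝ) + 1) ^ ζ' := key t
    _ ≤ C / ((t : ℝ) + 1) ^ ζ := by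
      apply div_le_div_of_nonneg_left hCnn (rpow_pos_of_pos (by positivity) _)
      exact rpow_le_rpow_of_exponent_le (by push_cast; linarith) hζζ'
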